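/- Assume G₁ is invertible. Define θ : ℝ → ℝ^{1×n} by θ(x) = [−C_X, C_X·H₁·G₁^{-1}]·exp(F₁·x)·[I_n; 0], i.e., the row vector consisting of the first n entries of [−C_X, C_X·H₁·G₁^{-1}]·exp(F₁·x). Then θ is twice differentiable and satisfies the kernel boundary value problem: q·θ''(x) = θ(x)·A for all x ∈ ℝ, θ(0) = −C_X, and θ(1) = 0. -/

import Mathlib

open scoped Matrix

/-- The block matrix `F₁ = [[0, A/q],[I, 0]]`. -/
noncomputable def F1block (n : ℕ) (q : ℝ) (A : Matrix (Fin n) (Fin n) ℝ) :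
    Matrix (Fin n ⊕ Fin n) (Fin n ⊕ Fin n) ℝ :=
  Matrix.fromBlocks 0 (q⁻¹ • A) 1 0

/-- `G₁ = [0, I]·exp(F₁)·[I; 0]`, the lower-left `n×n` block of `exp F₁`. -/
noncomputable def G1block (n : ℕ) (q : ℝ) (A : Matrix (Fin n) (Fin n) ℝ) :
    Matrix (Fin n) (Fin n) ℝ :=
  (NormedSpace.exp (F1block n q A)).toBlocks₂₁

/-- `H₁ = [I, 0]·exp(F₁)·[I; 0]`, the upper-left `n×n` block of `exp F₁`. -/
noncomputable def H1block (n : ℕ) (q : ℝ) (A : Matrix (Fin n) (Fin n) ℝ) :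
    Matrix (Fin n) (Fin n) ℝ :=
  (NormedSpace.exp (F1block n q A)).toBlocks₁₁

section AuxCLM

/-- Auxiliary continuous linear map `M ↦ (v ᵥ* (M * B)) ∘ Sum.inl`. -/
noncomputable def auxCLM {n : ℕ} (v : Fin n ⊕ Fin n → ℝ)
    (B : Matrix (Fin n ⊕ Fin n) (Fin n ⊕ Fin n) ℝ) :
    Matrix (Fin n ⊕ Fin n) (Fin n ⊕ Fin n) ℝ →L[ℝ] (Fin n → ℝ) :=
  LinearMap.toContinuousLinearMap
  { toFun := fun M j => (v ᵥ* (M * B)) (Sum.inl j)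
    map_add' := by
      intro M N
      funext j
      simp [Matrix.add_mul, Matrix.vecMul_add]
    map_smul' := by
      intro c M
      funext j
      simp only [Matrix.smul_mul, Matrix.vecMul, dotProduct, Pi.smul_apply,
        Matrix.smul_apply, smul_eq_mul, RingHom.id_apply, Fintype.sum_sum_type, mul_left_comm]
      rw [mul_add, Finset.mul_sum, Finset.mul_sum] }

@[simp] lemma auxCLM_apply {n : ℕ} (v : Fin n ⊕ Fin n → ℝ)
    (B M : Matrix (Fin n ⊕ Fin n) (Fin n ⊕ Fin n) ℝ) (j : Fin n) :
    auxCLM v B M j = (v ᵥ* (M * B)) (Sum.inl j) := rfl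

end AuxCLM

/-- the explicit kernel
`θ(x) = [−C_X, C_X·H₁·G₁⁻¹]·exp(F₁x)·[I; 0]` is twice differentiable and solves
`q·θ'' = θ·A`, `θ(0) = −C_X`, `θ(1) = 0`. -/
theorem stmt5
    (n : ℕ) (hn : 1 ≤ n)
    (A : Matrix (Fin n) (Fin n) ℝ) (CX : Fin n → ℝ)
    (q : ℝ) (hq : q ≠ 0)
    (hG1 : IsUnit (G1block n q A).det)
    (θ : ℝ → Fin n → ℝ)
    (hθ : θ = fun x => fun j =>
      (Sum.elim (-CX) (CX ᵥ* (H1block n q A * (G1block n q A)⁻¹))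
        ᵥ* NormedSpace.exp (x • F1block n q A)) (Sum.inl j)) :
    (Differentiable ℝ θ ∧ Differentiable ℝ (deriv θ))
    ∧ (∀ x : ℝ, q • deriv (deriv θ) x = θ x ᵥ* A)
    ∧ θ 0 = -CX
    ∧ θ 1 = 0 := by
  letI : NormedRing (Matrix (Fin n ⊕ Fin n) (Fin n ⊕ Fin n) ℝ) := Matrix.linftyOpNormedRing
  letI : NormedAlgebra ℝ (Matrix (Fin n ⊕ Fin n) (Fin n ⊕ Fin n) ℝ) :=
    Matrix.linftyOpNormedAlgebra
  set F := F1block n q A with hF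
  set v : Fin n ⊕ Fin n → ℝ :=
    Sum.elim (-CX) (CX ᵥ* (H1block n q A * (G1block n q A)⁻¹)) with hv
  set E : ℝ → Matrix (Fin n ⊕ Fin n) (Fin n ⊕ Fin n) ℝ :=
    fun x => NormedSpace.exp (x • F) with hE
  have hEd : ∀ x : ℝ, HasDerivAt E (E x * F) x := fun x => hasDerivAt_exp_smul_const F x
  have key : ∀ (B : Matrix (Fin n ⊕ Fin n) (Fin n ⊕ Fin n) ℝ) (x : ℝ),
      HasDerivAt (fun y => auxCLM v B (E y)) (auxCLM v B (E x * F)) x :=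
    fun B x => (auxCLM v B).hasFDerivAt.comp_hasDerivAt x (hEd x)
  have hθ1 : θ = fun x => auxCLM v 1 (E x) := by
    rw [hθ]; funext x j; simp; rfl
  have hd1 : deriv θ = fun x => auxCLM v F (E x) := by
    funext x
    rw [hθ1]
    rw [(key 1 x).deriv]
    funext j
    simp [Matrix.mul_assoc]
  refine ⟨⟨?_, ?_⟩, ?_, ?_, ?_⟩
  · rw [hθ1]; exact fun x => (key 1 x).differentiableAt
  · rw [hd1]; exact fun x => (key F x).differentiableAt
  · intro x
    rw [hd1, (key F x).deriv, hθ1]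
    have hFF : F * F = Matrix.fromBlocks (q⁻¹ • A) 0 0 (q⁻¹ • A) := by
      rw [hF]
      unfold F1block
      rw [Matrix.fromBlocks_multiply]
      simp
    funext j
    have hw : (v ᵥ* (E x * F * F)) (Sum.inl j)
        = ((v ᵥ* E x) ᵥ* (F * F)) (Sum.inl j) := by
      rw [Matrix.vecMul_vecMul, Matrix.mul_assoc]
    simp only [Pi.smul_apply, auxCLM_apply, hw, hFF, smul_eq_mul]
    simp [Matrix.vecMul, dotProduct, Fintype.sum_sum_type,
      Matrix.fromBlocks_apply₁₁, Matrix.fromBlocks_apply₂₁, Finset.mul_sum, mul_left_comm,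
      mul_assoc, mul_comm]
    refine Finset.sum_congr rfl fun i _ => ?_
    field_simp
  · rw [hθ]
    funext j
    simp [NormedSpace.exp_zero, Matrix.vecMul_one, hv]
  · rw [hθ]
    have h2 : (CX ᵥ* (H1block n q A * (G1block n q A)⁻¹)) ᵥ* G1block n q A
        = CX ᵥ* H1block n q A := by
      rw [Matrix.vecMul_vecMul, Matrix.mul_assoc, Matrix.nonsing_inv_mul _ hG1,
        Matrix.mul_one]
    have key1 : (fun j => (v ᵥ* NormedSpace.exp F) (Sum.inl j))
        = (-CX) ᵥ* H1block n q A
          + (CX ᵥ* (H1block n q A * (G1block n q A)⁻¹)) ᵥ* G1block n q A := by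
      funext j
      simp only [hv, hF, Matrix.vecMul, dotProduct, Fintype.sum_sum_type,
        Sum.elim_inl, Sum.elim_inr, Pi.add_apply, Pi.neg_apply, H1block, G1block,
        Matrix.toBlocks₁₁, Matrix.toBlocks₂₁, Matrix.of_apply, neg_mul]
    simp only [one_smul]
    rw [key1, h2, Matrix.neg_vecMul, neg_add_cancel]
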